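/- Let n ≠ 0, α ∈ ℝ with αn + 2 ≠ 0, and C ∈ ℝ. On an open set where x > 0 and C − (αn + 2 + 4/n)t > 0, the function u(t,x) := ( x² / (C − (αn + 2 + 4n^{-1}) t) )^{1/n} is a positive solution of u_t = (u^n u_x)_x + α x^{-2} u^{n+1}. -/

import Mathlib

set_option maxHeartbeats 1000000


/-- u = (x²/(C−(αn+2+4/n)t))^{1/n} is a positive solution of
u_t = (u^n u_x)_x + α x^{-2} u^{n+1} where x > 0 and the base is positive. -/
theorem stmt14 (n α C : ℝ) (hn : n ≠ 0) (hαn : α * n + 2 ≠ 0)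
    (Ω : Set (ℝ × ℝ)) (hΩ : IsOpen Ω)
    (hx : ∀ p ∈ Ω, 0 < p.2)
    (hden : ∀ p ∈ Ω, 0 < C - (α * n + 2 + 4 / n) * p.1)
    (u : ℝ → ℝ → ℝ)
    (hu : ∀ t x, u t x = (x ^ 2 / (C - (α * n + 2 + 4 / n) * t)) ^ (1 / n)) :
    ∀ p ∈ Ω, 0 < u p.1 p.2 ∧
      deriv (fun s => u s p.2) p.1 =
        deriv (fun y => u p.1 y ^ n * deriv (fun z => u p.1 z) y) p.2
          + α / p.2 ^ 2 * u p.1 p.2 ^ (n + 1) := by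
  intro p hp
  obtain ⟨t, x⟩ := p
  have hx0 : (0:ℝ) < x := hx (t, x) hp
  set k : ℝ := α * n + 2 + 4 / n with hk
  have hD : 0 < C - k * t := hden (t, x) hp
  set D : ℝ := C - k * t with hDdef
  have hbase : 0 < x ^ 2 / D := div_pos (by positivity) hD
  simp only [hu]
  refine ⟨Real.rpow_pos_of_pos hbase _, ?_⟩
  -- time derivative
  have hDt : HasDerivAt (fun s : ℝ => C - k * s) (-k) t := by
    simpa using ((hasDerivAt_id t).const_mul k).const_sub C
  have hfrac : HasDerivAt (fun s : ℝ => x ^ 2 / (C - k * s))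
      ((0 * (C - k * t) - x ^ 2 * (-k)) / (C - k * t) ^ 2) t :=
    (hasDerivAt_const t (x ^ 2)).div hDt hD.ne'
  have hT : HasDerivAt (fun s : ℝ => (x ^ 2 / (C - k * s)) ^ (1 / n))
      ((0 * (C - k * t) - x ^ 2 * (-k)) / (C - k * t) ^ 2 * (1 / n) *
        (x ^ 2 / D) ^ (1 / n - 1)) t :=
    hfrac.rpow_const (Or.inl hbase.ne')
  rw [hT.deriv]
  -- spatial derivative of u at any y > 0
  have hxd : ∀ y : ℝ, 0 < y →
      HasDerivAt (fun z : ℝ => (z ^ 2 / D) ^ (1 / n))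
        ((2 * y / D) * (1 / n) * (y ^ 2 / D) ^ (1 / n - 1)) y := by
    intro y hy
    have h1 : HasDerivAt (fun z : ℝ => z ^ 2 / D) (2 * y / D) y := by
      simpa using (hasDerivAt_pow 2 y).div_const D
    have hby : y ^ 2 / D ≠ 0 := (div_pos (by positivity) hD).ne'
    exact h1.rpow_const (Or.inl hby)
  -- replace flux function by a clean formula near x
  have hev : (fun y => ((y ^ 2 / D) ^ (1 / n)) ^ n *
        deriv (fun z => (z ^ 2 / D) ^ (1 / n)) y) =ᶠ[nhds x]
      (fun y => (2 / n) * (y * (y ^ 2 / D) ^ (1 / n)) / D) := by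
    filter_upwards [Ioi_mem_nhds hx0] with y hy
    have hy0 : (0:ℝ) < y := hy
    have hby : (0:ℝ) < y ^ 2 / D := div_pos (by positivity) hD
    have hA : (y ^ 2 / D) ^ (1 / n) = (y ^ 2 / D) ^ (1 / n - 1) * (y ^ 2 / D) := by
      rw [← Real.rpow_add_one hby.ne']
      congr 1
      ring
    rw [(hxd y hy0).deriv, ← Real.rpow_mul hby.le, one_div_mul_cancel hn,
      Real.rpow_one, hA]
    ring
  rw [hev.deriv_eq]
  have hG : HasDerivAt (fun y : ℝ => (2 / n) * (y * (y ^ 2 / D) ^ (1 / n)) / D)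
      ((2 / n) * (1 * (x ^ 2 / D) ^ (1 / n) +
        x * ((2 * x / D) * (1 / n) * (x ^ 2 / D) ^ (1 / n - 1))) / D) x :=
    (((hasDerivAt_id x).mul (hxd x hx0)).const_mul (2 / n)).div_const D
  rw [hG.deriv]
  have hAx : (x ^ 2 / D) ^ (1 / n) = (x ^ 2 / D) ^ (1 / n - 1) * (x ^ 2 / D) := by
    rw [← Real.rpow_add_one hbase.ne']
    congr 1
    ring
  have hP : ((x ^ 2 / D) ^ (1 / n)) ^ (n + 1)
      = (x ^ 2 / D) ^ (1 / n - 1) * (x ^ 2 / D) * (x ^ 2 / D) := by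
    rw [← Real.rpow_mul hbase.le, ← Real.rpow_add_one hbase.ne',
      ← Real.rpow_add_one hbase.ne']
    congr 1
    field_simp
    ring
  rw [hP, hAx, ← hDdef]
  clear hDdef
  clear_value D
  clear hT hG hev hxd hfrac hDt hu hden hbase
  generalize (x ^ 2 / D) ^ (1 / n - 1) = B
  have hk' : k = α * n + 2 + 4 / n := hk
  clear_value k
  subst hk'
  field_simp
  ring
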